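/- Weak duality for portfolio optimization with transaction costs: with bond price ≡ 1, stock price P¹(k) > 0 adapted, initial position (x₀, x₁), any admissible strategy I, and any price system (ρ⁰, ρ¹), and any ξ > 0, the terminal expected utility satisfies E[U(X⁰(T) - h(-X¹(T)) P¹(T))] ≤ E[U*(ξ ρ⁰(T))] + ξ x₁ E[ρ¹(T)] + ξ x₀, where X⁰(T) = x₀ - Σ_{l=0}^T h(I(l)) P¹(l), X¹(T) = x₁ + Σ_{l=0}^T I(l). -/

import Mathlib

open MeasureTheory


-- every function on a finite measurable-singleton space is integrable
private lemma fin_int {Ω : Type*} [Fintype Ω] {m : MeasurableSpace Ω}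
    [MeasurableSingletonClass Ω] (P : Measure Ω) [IsFiniteMeasure P] (f : Ω → ℝ) :
    Integrable f P := Integrable.of_finite

private lemma key_ineq {Ω : Type*} [Fintype Ω] {m : MeasurableSpace Ω}
    [MeasurableSingletonClass Ω] (P : Measure Ω) [IsProbabilityMeasure P]
    (𝒢 : MeasurableSpace Ω) (h𝒢 : 𝒢 ≤ m)
    (lam0 lam1 : ℝ)
    (ρ0 ρ1 : Ω → ℝ) (hρ0pos : ∀ ω, 0 < ρ0 ω)
    (p z : Ω → ℝ) (hppos : ∀ ω, 0 < p ω)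
    (hz : StronglyMeasurable[𝒢] z)
    (hps : ∀ᵐ ω ∂P, 1 - lam1 ≤ (P[ρ1|𝒢]) ω / ((P[ρ0|𝒢]) ω * p ω) ∧
        (P[ρ1|𝒢]) ω / ((P[ρ0|𝒢]) ω * p ω) ≤ 1 + lam0)
    (g : Ω → ℝ)
    (hg : ∀ ω, g ω = (if 0 < z ω then (1 + lam0) * z ω else (1 - lam1) * z ω) * p ω)
    (hgmeas : StronglyMeasurable[𝒢] g) :
    ∫ ω, ρ1 ω * z ω ∂P ≤ ∫ ω, ρ0 ω * g ω ∂P := by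
  haveI : Nonempty Ω := by
    by_contra hne
    rw [not_nonempty_iff] at hne
    have h1 : P Set.univ = 1 := measure_univ
    simp [Set.univ_eq_empty_iff.2 hne] at h1
  haveI : SigmaFinite (P.trim h𝒢) := inferInstance
  -- lower bound for condexp of ρ0
  obtain ⟨ω0⟩ := (inferInstance : Nonempty Ω)
  set ε : ℝ := Finset.univ.inf' Finset.univ_nonempty ρ0 with hε
  have hεpos : 0 < ε := by
    rw [hε]
    exact (Finset.lt_inf'_iff _).2 fun ω _ => hρ0pos ω
  have hεle : ∀ ω, ε ≤ ρ0 ω := fun ω => Finset.inf'_le _ (Finset.mem_univ ω)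
  have hq_ge : ∀ᵐ ω ∂P, ε ≤ (P[ρ0|𝒢]) ω := by
    have h1 : (P[(fun _ => ε)|𝒢]) ≤ᵐ[P] P[ρ0|𝒢] :=
      condExp_mono (integrable_const ε) (fin_int P ρ0) (Filter.Eventually.of_forall hεle)
    filter_upwards [h1] with ω hω
    rwa [condExp_const h𝒢] at hω
  -- pointwise a.e. inequality
  have hpt : ∀ᵐ ω ∂P, z ω * (P[ρ1|𝒢]) ω ≤ g ω * (P[ρ0|𝒢]) ω := by
    filter_upwards [hps, hq_ge] with ω ⟨h1, h2⟩ hq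
    set q := (P[ρ0|𝒢]) ω
    set r := (P[ρ1|𝒢]) ω
    have hd : 0 < q * p ω := mul_pos (lt_of_lt_of_le hεpos hq) (hppos ω)
    rw [le_div_iff₀ hd] at h1
    rw [div_le_iff₀ hd] at h2
    rw [hg ω]
    by_cases hzp : 0 < z ω
    · rw [if_pos hzp]; nlinarith
    · rw [if_neg hzp]
      push_neg at hzp
      nlinarith
  -- rewrite both integrals via condexp
  have e1 : ∫ ω, ρ1 ω * z ω ∂P = ∫ ω, z ω * (P[ρ1|𝒢]) ω ∂P := by
    have h2 : P[z * ρ1|𝒢] =ᵐ[P] z * P[ρ1|𝒢] :=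
      condExp_mul_of_stronglyMeasurable_left hz (fin_int P _) (fin_int P _)
    calc ∫ ω, ρ1 ω * z ω ∂P = ∫ ω, (z * ρ1) ω ∂P := by
          simp only [Pi.mul_apply]; congr 1; ext ω; ring
      _ = ∫ ω, (P[z * ρ1|𝒢]) ω ∂P := (integral_condExp h𝒢).symm
      _ = ∫ ω, (z * P[ρ1|𝒢]) ω ∂P := integral_congr_ae h2
      _ = ∫ ω, z ω * (P[ρ1|𝒢]) ω ∂P := rfl
  have e2 : ∫ ω, ρ0 ω * g ω ∂P = ∫ ω, g ω * (P[ρ0|𝒢]) ω ∂P := by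
    have h2 : P[g * ρ0|𝒢] =ᵐ[P] g * P[ρ0|𝒢] :=
      condExp_mul_of_stronglyMeasurable_left hgmeas (fin_int P _) (fin_int P _)
    calc ∫ ω, ρ0 ω * g ω ∂P = ∫ ω, (g * ρ0) ω ∂P := by
          simp only [Pi.mul_apply]; congr 1; ext ω; ring
      _ = ∫ ω, (P[g * ρ0|𝒢]) ω ∂P := (integral_condExp h𝒢).symm
      _ = ∫ ω, (g * P[ρ0|𝒢]) ω ∂P := integral_congr_ae h2
      _ = ∫ ω, g ω * (P[ρ0|𝒢]) ω ∂P := rfl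
  rw [e1, e2]
  exact integral_mono_ae (fin_int P _) (fin_int P _) hpt

private lemma g_meas {Ω : Type*} {𝒢 : MeasurableSpace Ω} (lam0 lam1 : ℝ) (z p : Ω → ℝ)
    (hz : StronglyMeasurable[𝒢] z) (hp : StronglyMeasurable[𝒢] p) :
    StronglyMeasurable[𝒢]
      (fun ω => (if 0 < z ω then (1 + lam0) * z ω else (1 - lam1) * z ω) * p ω) := by
  apply Measurable.stronglyMeasurable
  exact (Measurable.ite (measurableSet_lt measurable_const hz.measurable)
    (measurable_const.mul hz.measurable) (measurable_const.mul hz.measurable)).mul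
    hp.measurable


theorem stmt10 {Ω : Type*} [Fintype Ω] {m : MeasurableSpace Ω} [MeasurableSingletonClass Ω]
    (P : Measure Ω) [IsProbabilityMeasure P]
    (ℱ : Filtration ℕ m) (T : ℕ)
    (lam0 lam1 : ℝ) (hlam0 : 0 < lam0) (hlam1 : 0 < lam1)
    (h : ℝ → ℝ) (hh : ∀ z : ℝ, h z = if 0 < z then (1 + lam0) * z else (1 - lam1) * z)
    (U : ℝ → ℝ) (hU : StrictMonoOn U (Set.Ici 0))
    (Ustar : ℝ → ℝ)
    (hUstar : ∀ y : ℝ, 0 < y → Ustar y = sSup {z : ℝ | ∃ x : ℝ, 0 ≤ x ∧ z = U x - x * y})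
    (hbdd : ∀ y : ℝ, 0 < y → BddAbove {z : ℝ | ∃ x : ℝ, 0 ≤ x ∧ z = U x - x * y})
    (P1 : ℕ → Ω → ℝ) (hP1 : StronglyAdapted ℱ P1) (hP1pos : ∀ k ω, 0 < P1 k ω)
    (x0 x1 : ℝ)
    (I : ℕ → Ω → ℝ) (hI : StronglyAdapted ℱ I)
    (X0 X1 : ℕ → Ω → ℝ)
    (hX0 : ∀ k ω, X0 k ω = x0 - ∑ l ∈ Finset.range (k + 1), h (I l ω) * P1 l ω)
    (hX1 : ∀ k ω, X1 k ω = x1 + ∑ l ∈ Finset.range (k + 1), I l ω)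
    (hadm : ∀ k ≤ T, ∀ ω, 0 ≤ X0 k ω - h (-(X1 k ω)) * P1 k ω)
    (ρ0 ρ1 : Ω → ℝ) (hρ0pos : ∀ ω, 0 < ρ0 ω) (hρ1pos : ∀ ω, 0 < ρ1 ω)
    (hρ0E : ∫ ω, ρ0 ω ∂P = 1)
    (hps : ∀ k ≤ T, ∀ᵐ ω ∂P,
      1 - lam1 ≤ (P[ρ1 | ℱ k]) ω / ((P[ρ0 | ℱ k]) ω * P1 k ω) ∧
        (P[ρ1 | ℱ k]) ω / ((P[ρ0 | ℱ k]) ω * P1 k ω) ≤ 1 + lam0)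
    (ξ : ℝ) (hξ : 0 < ξ) :
    ∫ ω, U (X0 T ω - h (-(X1 T ω)) * P1 T ω) ∂P
      ≤ ∫ ω, Ustar (ξ * ρ0 ω) ∂P + ξ * x1 * ∫ ω, ρ1 ω ∂P + ξ * x0 := by
  -- Step 1: pointwise Fenchel inequality
  have step1 : ∀ ω, U (X0 T ω - h (-(X1 T ω)) * P1 T ω) ≤
      Ustar (ξ * ρ0 ω) + ξ * (ρ0 ω * (X0 T ω - h (-(X1 T ω)) * P1 T ω)) := by
    intro ω
    set V := X0 T ω - h (-(X1 T ω)) * P1 T ω with hVdef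
    have hV0 : 0 ≤ V := hadm T le_rfl ω
    have hy : 0 < ξ * ρ0 ω := mul_pos hξ (hρ0pos ω)
    have hmem : U V - V * (ξ * ρ0 ω) ∈
        {z : ℝ | ∃ x : ℝ, 0 ≤ x ∧ z = U x - x * (ξ * ρ0 ω)} := ⟨V, hV0, rfl⟩
    have hle := le_csSup (hbdd _ hy) hmem
    rw [hUstar _ hy]
    have heq : V * (ξ * ρ0 ω) = ξ * (ρ0 ω * V) := by ring
    linarith
  -- key bounds for each trading date
  have hbl : ∀ l ∈ Finset.range (T + 1),
      ∫ ω, ρ1 ω * I l ω ∂P ≤ ∫ ω, ρ0 ω * (h (I l ω) * P1 l ω) ∂P := by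
    intro l hl
    have hlT : l ≤ T := Nat.lt_succ_iff.mp (Finset.mem_range.mp hl)
    have hgfun : (fun ω => h (I l ω) * P1 l ω) =
        fun ω => (if 0 < I l ω then (1 + lam0) * I l ω else (1 - lam1) * I l ω) * P1 l ω := by
      funext ω; rw [hh]
    refine key_ineq P (ℱ l) (ℱ.le l) lam0 lam1 ρ0 ρ1 hρ0pos (P1 l) (I l) (hP1pos l)
      (hI l) (hps l hlT) _ (fun ω => by rw [hh]) ?_
    rw [hgfun]
    exact g_meas lam0 lam1 (I l) (P1 l) (hI l) (hP1 l)
  -- bound for the terminal liquidation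
  have hX1meas : StronglyMeasurable[ℱ T] (fun ω => -(X1 T ω)) := by
    have hX1fun : (fun ω => X1 T ω) =
        fun ω => x1 + ∑ l ∈ Finset.range (T + 1), I l ω := funext (hX1 T)
    have : StronglyMeasurable[ℱ T] (fun ω => X1 T ω) := by
      rw [hX1fun]
      exact stronglyMeasurable_const.add
        (Finset.stronglyMeasurable_fun_sum _ fun l hl =>
          (hI l).mono (ℱ.mono (Nat.lt_succ_iff.mp (Finset.mem_range.mp hl))))
    exact this.neg
  have hbT : ∫ ω, ρ1 ω * (-(X1 T ω)) ∂P
      ≤ ∫ ω, ρ0 ω * (h (-(X1 T ω)) * P1 T ω) ∂P := by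
    have hgfun : (fun ω => h (-(X1 T ω)) * P1 T ω) =
        fun ω => (if 0 < -(X1 T ω) then (1 + lam0) * -(X1 T ω)
          else (1 - lam1) * -(X1 T ω)) * P1 T ω := by
      funext ω; rw [hh]
    refine key_ineq P (ℱ T) (ℱ.le T) lam0 lam1 ρ0 ρ1 hρ0pos (P1 T)
      (fun ω => -(X1 T ω)) (hP1pos T) hX1meas (hps T le_rfl) _ (fun ω => by rw [hh]) ?_
    rw [hgfun]
    exact g_meas lam0 lam1 _ (P1 T) hX1meas (hP1 T)
  -- sum identity
  have hsum : (∑ l ∈ Finset.range (T + 1), ∫ ω, ρ1 ω * I l ω ∂P)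
      + ∫ ω, ρ1 ω * (-(X1 T ω)) ∂P = -x1 * ∫ ω, ρ1 ω ∂P := by
    rw [← integral_finset_sum _ (fun l _ => fin_int P _),
      ← integral_add (fin_int P _) (fin_int P _), ← integral_const_mul _ _]
    congr 1; funext ω
    rw [hX1, ← Finset.mul_sum]; ring
  -- decomposition of E[ρ0 V]
  have hdecomp : ∫ ω, ρ0 ω * (X0 T ω - h (-(X1 T ω)) * P1 T ω) ∂P
      = x0 * (∫ ω, ρ0 ω ∂P)
        - (∑ l ∈ Finset.range (T + 1), ∫ ω, ρ0 ω * (h (I l ω) * P1 l ω) ∂P)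
        - ∫ ω, ρ0 ω * (h (-(X1 T ω)) * P1 T ω) ∂P := by
    rw [← integral_const_mul _ _, ← integral_finset_sum _ (fun l _ => fin_int P _),
      ← integral_sub (fin_int P _) (fin_int P _),
      ← integral_sub (fin_int P _) (fin_int P _)]
    congr 1; funext ω
    rw [hX0, ← Finset.mul_sum]; ring
  -- Step 3: E[ρ0 V] ≤ x0 + x1 E[ρ1]
  have step3 : ∫ ω, ρ0 ω * (X0 T ω - h (-(X1 T ω)) * P1 T ω) ∂P
      ≤ x0 + x1 * ∫ ω, ρ1 ω ∂P := by
    have hsum_le : (∑ l ∈ Finset.range (T + 1), ∫ ω, ρ1 ω * I l ω ∂P)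
        ≤ ∑ l ∈ Finset.range (T + 1), ∫ ω, ρ0 ω * (h (I l ω) * P1 l ω) ∂P :=
      Finset.sum_le_sum hbl
    rw [hdecomp, hρ0E]
    linarith
  -- Step 2: integrate the Fenchel inequality and conclude
  have step2 : ∫ ω, U (X0 T ω - h (-(X1 T ω)) * P1 T ω) ∂P
      ≤ ∫ ω, Ustar (ξ * ρ0 ω) ∂P
        + ξ * ∫ ω, ρ0 ω * (X0 T ω - h (-(X1 T ω)) * P1 T ω) ∂P := by
    calc ∫ ω, U (X0 T ω - h (-(X1 T ω)) * P1 T ω) ∂P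
        ≤ ∫ ω, (Ustar (ξ * ρ0 ω)
            + ξ * (ρ0 ω * (X0 T ω - h (-(X1 T ω)) * P1 T ω))) ∂P :=
          integral_mono (fin_int P _) (fin_int P _) step1
      _ = ∫ ω, Ustar (ξ * ρ0 ω) ∂P
            + ξ * ∫ ω, ρ0 ω * (X0 T ω - h (-(X1 T ω)) * P1 T ω) ∂P := by
          rw [integral_add (fin_int P _) (fin_int P _), integral_const_mul _ _]
  have hmul : ξ * ∫ ω, ρ0 ω * (X0 T ω - h (-(X1 T ω)) * P1 T ω) ∂P
      ≤ ξ * (x0 + x1 * ∫ ω, ρ1 ω ∂P) := mul_le_mul_of_nonneg_left step3 hξ.le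
  have hring : ξ * (x0 + x1 * ∫ ω, ρ1 ω ∂P)
      = ξ * x1 * (∫ ω, ρ1 ω ∂P) + ξ * x0 := by ring
  linarith
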